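/- arXiv:1801.06803 — 2 statements merged into one kernel-verified Lean document; each statement's English description precedes it below -/
import Mathlib

section
/- Let 1 ≤ q ≤ ∞ and s ≥ 0 with s > n/q′. Then for sequences a, b : ℤⁿ → ℂ in ℓ^q_s, the convolution (a∗b)_k = Σ_{ℓ∈ℤⁿ} a_ℓ b_{k−ℓ} is well-defined and satisfies ‖a∗b‖_{ℓ^q_s} ≤ C ‖a‖_{ℓ^q_s} ‖b‖_{ℓ^q_s}, i.e., ℓ^q_s(ℤⁿ) is a convolution algebra. -/
open MeasureTheory
open scoped ENNReal NNReal

noncomputable section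

/-- The Japanese bracket `⟨k⟩ = (1+|k|²)^{1/2}` on `ℤⁿ` (with `|k|` the Euclidean norm). -/
def jbZ {n : ℕ} (k : Fin n → ℤ) : ℝ := (1 + ∑ i, ((k i : ℝ)) ^ 2) ^ ((1:ℝ)/2)

/-- The weighted norm `‖a‖_{ℓ^q_s} = (Σ_k ⟨k⟩^{sq} |a_k|^q)^{1/q}` (usual modification for
`q = ∞`), realized as the `L^q` norm of `k ↦ ⟨k⟩^s |a_k|` for the counting measure. -/
def lqsNorm {n : ℕ} (q : ℝ≥0∞) (s : ℝ) (a : (Fin n → ℤ) → ℂ) : ℝ≥0∞ :=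
  eLpNorm (fun k => jbZ k ^ s * ‖a k‖) q Measure.count

namespace LqsAux
variable {n : ℕ}

lemma sumsq_nonneg (k : Fin n → ℤ) : (0:ℝ) ≤ ∑ i, ((k i : ℝ)) ^ 2 :=
  Finset.sum_nonneg fun _ _ => sq_nonneg _

lemma one_le_base (k : Fin n → ℤ) : (1:ℝ) ≤ 1 + ∑ i, ((k i : ℝ)) ^ 2 := by
  linarith [sumsq_nonneg k]

lemma one_le_jbZ (k : Fin n → ℤ) : (1:ℝ) ≤ jbZ k :=
  Real.one_le_rpow (one_le_base k) (by norm_num)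

lemma jbZ_pos (k : Fin n → ℤ) : (0:ℝ) < jbZ k := lt_of_lt_of_le one_pos (one_le_jbZ k)

lemma jbZ_nonneg (k : Fin n → ℤ) : (0:ℝ) ≤ jbZ k := (jbZ_pos k).le

lemma jbZ_sq (k : Fin n → ℤ) : jbZ k ^ (2:ℕ) = 1 + ∑ i, ((k i : ℝ)) ^ 2 := by
  rw [jbZ, ← Real.rpow_natCast (_ ^ ((1:ℝ)/2)) 2,
    ← Real.rpow_mul (zero_le_one.trans (one_le_base k))]
  norm_num

/-- Cauchy–Schwarz piece: `∑ ℓᵢ mᵢ ≤ ⟨ℓ⟩⟨m⟩`. -/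
lemma inner_le (l m : Fin n → ℤ) :
    ∑ i, ((l i : ℝ)) * ((m i : ℝ)) ≤ jbZ l * jbZ m := by
  have h1 : (∑ i, ((l i : ℝ)) * ((m i : ℝ))) ^ 2 ≤
      (∑ i, ((l i : ℝ)) ^ 2) * ∑ i, ((m i : ℝ)) ^ 2 :=
    Finset.sum_mul_sq_le_sq_mul_sq Finset.univ _ _
  have h2 : (∑ i, ((l i : ℝ)) * ((m i : ℝ))) ^ 2 ≤ (jbZ l * jbZ m) ^ 2 := by
    rw [mul_pow, jbZ_sq, jbZ_sq]
    nlinarith [sumsq_nonneg l, sumsq_nonneg m]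
  exact le_of_sq_le_sq h2 (mul_nonneg (jbZ_nonneg l) (jbZ_nonneg m))

/-- Triangle-type inequality `⟨k⟩ ≤ ⟨ℓ⟩ + ⟨k-ℓ⟩`. -/
lemma jbZ_triangle (k l : Fin n → ℤ) : jbZ k ≤ jbZ l + jbZ (k - l) := by
  have h2 : jbZ k ^ (2:ℕ) ≤ (jbZ l + jbZ (k - l)) ^ (2:ℕ) := by
    have hk : jbZ k ^ (2:ℕ) = 1 + ∑ i, ((l i : ℝ) + ((k - l) i : ℝ)) ^ 2 := by
      rw [jbZ_sq]; congr 1; refine Finset.sum_congr rfl fun i _ => ?_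
      have : ((k i : ℝ)) = (l i : ℝ) + ((k - l) i : ℝ) := by
        simp [Pi.sub_apply]
      rw [this]
    have expand : ∑ i, ((l i : ℝ) + ((k - l) i : ℝ)) ^ 2
        = (∑ i, ((l i : ℝ))^2) + (∑ i, (((k - l) i : ℝ))^2)
          + 2 * ∑ i, ((l i : ℝ)) * (((k - l) i : ℝ)) := by
      rw [Finset.mul_sum, ← Finset.sum_add_distrib, ← Finset.sum_add_distrib]
      exact Finset.sum_congr rfl fun i _ => by ring
    have hcs := inner_le l (k - l)
    have h1l := jbZ_sq l; have h1m := jbZ_sq (k - l)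
    rw [hk, expand, add_sq]
    nlinarith [jbZ_pos l, jbZ_pos (k - l)]
  exact le_of_sq_le_sq h2 (add_nonneg (jbZ_nonneg l) (jbZ_nonneg (k - l)))

/-- Peetre-type inequality for `s ≥ 0`. -/
lemma jbZ_peetre {s : ℝ} (hs0 : 0 ≤ s) (k l : Fin n → ℤ) :
    jbZ k ^ s ≤ 2 ^ s * (jbZ l ^ s + jbZ (k - l) ^ s) := by
  have h1 : jbZ k ^ s ≤ (jbZ l + jbZ (k - l)) ^ s :=
    Real.rpow_le_rpow (jbZ_nonneg k) (jbZ_triangle k l) hs0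
  have h2 : jbZ l + jbZ (k - l) ≤ 2 * max (jbZ l) (jbZ (k - l)) := by
    rcases le_total (jbZ l) (jbZ (k - l)) with h | h
    · rw [max_eq_right h]; linarith
    · rw [max_eq_left h]; linarith
  have h3 : (jbZ l + jbZ (k - l)) ^ s ≤ (2 * max (jbZ l) (jbZ (k - l))) ^ s :=
    Real.rpow_le_rpow (add_nonneg (jbZ_nonneg l) (jbZ_nonneg (k - l))) h2 hs0
  have h4 : (2 * max (jbZ l) (jbZ (k - l))) ^ s
      = 2 ^ s * max (jbZ l) (jbZ (k - l)) ^ s :=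
    Real.mul_rpow (by norm_num) (le_max_of_le_left (jbZ_nonneg l))
  have h5 : max (jbZ l) (jbZ (k - l)) ^ s ≤ jbZ l ^ s + jbZ (k - l) ^ s := by
    rcases le_total (jbZ l) (jbZ (k - l)) with h | h
    · rw [max_eq_right h]
      nlinarith [Real.rpow_nonneg (jbZ_nonneg l) s]
    · rw [max_eq_left h]
      nlinarith [Real.rpow_nonneg (jbZ_nonneg (k - l)) s]
  calc jbZ k ^ s ≤ (2 * max (jbZ l) (jbZ (k - l))) ^ s := h1.trans h3
    _ = 2 ^ s * max (jbZ l) (jbZ (k - l)) ^ s := h4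
    _ ≤ 2 ^ s * (jbZ l ^ s + jbZ (k - l) ^ s) := by
        have : (0:ℝ) ≤ (2:ℝ) ^ s := Real.rpow_nonneg (by norm_num) s
        nlinarith


/-- `⟨k⟩` as an extended nonnegative real. -/
def wE (k : Fin n → ℤ) : ℝ≥0∞ := ENNReal.ofReal (jbZ k)

lemma wE_ne_zero (k : Fin n → ℤ) : wE k ≠ 0 := by
  simp [wE, ENNReal.ofReal_eq_zero, not_le, jbZ_pos k]

lemma wE_ne_top (k : Fin n → ℤ) : wE k ≠ ∞ := ENNReal.ofReal_ne_top

lemma one_le_wE (k : Fin n → ℤ) : 1 ≤ wE k := by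
  rw [wE, ← ENNReal.ofReal_one]
  exact ENNReal.ofReal_le_ofReal (one_le_jbZ k)

lemma wE_rpow_eq (k : Fin n → ℤ) (s : ℝ) :
    wE k ^ s = ENNReal.ofReal (jbZ k ^ s) := by
  rw [wE, ← ENNReal.ofReal_rpow_of_pos (jbZ_pos k)]

lemma one_le_wE_rpow (k : Fin n → ℤ) {s : ℝ} (hs0 : 0 ≤ s) : 1 ≤ wE k ^ s := by
  calc (1:ℝ≥0∞) = 1 ^ s := (ENNReal.one_rpow s).symm
    _ ≤ wE k ^ s := ENNReal.rpow_le_rpow (one_le_wE k) hs0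

lemma wE_rpow_ne_top (k : Fin n → ℤ) (s : ℝ) : wE k ^ s ≠ ∞ := by
  rw [wE_rpow_eq]; exact ENNReal.ofReal_ne_top

lemma wE_rpow_ne_zero (k : Fin n → ℤ) (s : ℝ) : wE k ^ s ≠ 0 := by
  rw [wE_rpow_eq]
  simp [ENNReal.ofReal_eq_zero, not_le, Real.rpow_pos_of_pos (jbZ_pos k)]

/-- Peetre inequality in `ℝ≥0∞`. -/
lemma wE_peetre {s : ℝ} (hs0 : 0 ≤ s) (k l : Fin n → ℤ) :
    wE k ^ s ≤ (2:ℝ≥0∞) ^ s * (wE l ^ s + wE (k - l) ^ s) := by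
  rw [wE_rpow_eq, wE_rpow_eq, wE_rpow_eq]
  calc ENNReal.ofReal (jbZ k ^ s)
      ≤ ENNReal.ofReal (2 ^ s * (jbZ l ^ s + jbZ (k - l) ^ s)) :=
        ENNReal.ofReal_le_ofReal (jbZ_peetre hs0 k l)
    _ = ENNReal.ofReal (2 ^ s) *
        (ENNReal.ofReal (jbZ l ^ s) + ENNReal.ofReal (jbZ (k - l) ^ s)) := by
        rw [ENNReal.ofReal_mul (Real.rpow_nonneg (by norm_num) s), ENNReal.ofReal_add
          (Real.rpow_nonneg (jbZ_pos l).le s) (Real.rpow_nonneg (jbZ_pos (k - l)).le s)]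
    _ = (2:ℝ≥0∞) ^ s * (ENNReal.ofReal (jbZ l ^ s) + ENNReal.ofReal (jbZ (k - l) ^ s)) := by
        rw [← ENNReal.ofReal_rpow_of_pos (by norm_num : (0:ℝ) < 2)]
        norm_num

/-- The `ℓ^q` "norm" of an `ℝ≥0∞`-valued sequence. -/
def QN (q : ℝ≥0∞) (f : (Fin n → ℤ) → ℝ≥0∞) : ℝ≥0∞ :=
  if q = ∞ then ⨆ k, f k else (∑' k, f k ^ q.toReal) ^ (1 / q.toReal)

lemma lqsNorm_eq {q : ℝ≥0∞} (hq : 1 ≤ q) (s : ℝ) (a : (Fin n → ℤ) → ℂ) :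
    lqsNorm q s a = QN q (fun k => wE k ^ s * (‖a k‖₊ : ℝ≥0∞)) := by
  have hq0 : q ≠ 0 := by positivity
  have hnn : ∀ k : Fin n → ℤ, ((‖jbZ k ^ s * ‖a k‖‖₊ : ℝ≥0) : ℝ≥0∞)
      = wE k ^ s * (‖a k‖₊ : ℝ≥0∞) := by
    intro k
    rw [← enorm_eq_nnnorm, ← ofReal_norm, Real.norm_of_nonneg
      (mul_nonneg (Real.rpow_nonneg (jbZ_pos k).le s) (norm_nonneg _)),
      ENNReal.ofReal_mul (Real.rpow_nonneg (jbZ_pos k).le s), wE_rpow_eq,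
      ofReal_norm, enorm_eq_nnnorm]
  rcases eq_or_ne q ∞ with rfl | hqt
  · rw [lqsNorm, eLpNorm_exponent_top, QN, if_pos rfl, eLpNormEssSup, essSup_count]
    exact iSup_congr hnn
  · rw [lqsNorm, eLpNorm_eq_lintegral_rpow_enorm_toReal hq0 hqt, QN, if_neg hqt, lintegral_count]
    congr 1
    exact tsum_congr fun k => by rw [enorm_eq_nnnorm, hnn k]

variable {q : ℝ≥0∞}

lemma toReal_pos (hq : 1 ≤ q) (hqt : q ≠ ∞) : 0 < q.toReal :=
  ENNReal.toReal_pos (by positivity) hqt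

lemma one_le_toReal (hq : 1 ≤ q) (hqt : q ≠ ∞) : 1 ≤ q.toReal := by
  rw [← ENNReal.toReal_one]
  exact ENNReal.toReal_mono hqt hq

lemma QN_mono {f g : (Fin n → ℤ) → ℝ≥0∞} (h : ∀ k, f k ≤ g k) : QN q f ≤ QN q g := by
  rw [QN, QN]
  split
  · exact iSup_mono h
  · exact ENNReal.rpow_le_rpow (ENNReal.tsum_le_tsum fun k =>
      ENNReal.rpow_le_rpow (h k) ENNReal.toReal_nonneg) (by positivity)

lemma QN_const_mul (hq : 1 ≤ q) (c : ℝ≥0∞) (f : (Fin n → ℤ) → ℝ≥0∞) :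
    QN q (fun k => c * f k) ≤ c * QN q f := by
  rw [QN, QN]
  split
  · exact iSup_le fun k => mul_le_mul_right (le_iSup _ k) c
  · rename_i hqt
    have hr : 0 < q.toReal := toReal_pos hq hqt
    have : ∀ k, (c * f k) ^ q.toReal = c ^ q.toReal * f k ^ q.toReal := fun k =>
      ENNReal.mul_rpow_of_nonneg _ _ ENNReal.toReal_nonneg
    simp_rw [this]
    rw [ENNReal.tsum_mul_left, ENNReal.mul_rpow_of_nonneg _ _ (by positivity : (0:ℝ) ≤ 1 / q.toReal),
      ← ENNReal.rpow_mul, mul_one_div_cancel hr.ne', ENNReal.rpow_one]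

lemma QN_add_le (hq : 1 ≤ q) (f g : (Fin n → ℤ) → ℝ≥0∞) :
    QN q (fun k => f k + g k) ≤ QN q f + QN q g := by
  rw [QN, QN, QN]
  split
  · exact iSup_le fun k => add_le_add (le_iSup _ k) (le_iSup _ k)
  · rename_i hqt
    have h1 : 1 ≤ q.toReal := one_le_toReal hq hqt
    have := ENNReal.lintegral_Lp_add_le (μ := Measure.count)
      (f := f) (g := g) (measurable_of_countable f).aemeasurable
      (measurable_of_countable g).aemeasurable h1
    simpa [lintegral_count] using this

lemma le_QN (hq : 1 ≤ q) (f : (Fin n → ℤ) → ℝ≥0∞) (j : Fin n → ℤ) : f j ≤ QN q f := by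
  rw [QN]
  split
  · exact le_iSup _ j
  · rename_i hqt
    have hr : 0 < q.toReal := toReal_pos hq hqt
    calc f j = (f j ^ q.toReal) ^ (1 / q.toReal) := by
          rw [← ENNReal.rpow_mul, mul_one_div_cancel hr.ne', ENNReal.rpow_one]
      _ ≤ (∑' k, f k ^ q.toReal) ^ (1 / q.toReal) :=
          ENNReal.rpow_le_rpow (ENNReal.le_tsum j) (by positivity)

/-- One-dimensional summability. -/
lemma onedim_sum {t : ℝ} (ht : 1/2 < t) :
    ∑' m : ℤ, ENNReal.ofReal ((1 + (m:ℝ) ^ 2) ^ (-t)) ≠ ∞ := by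
  have hb : (1:ℝ) < 2 * t := by linarith
  have hsum : Summable fun m : ℤ => |(m:ℝ)| ^ (-(2 * t)) := Real.summable_abs_int_rpow hb
  have hbound : ∀ m : ℤ, ENNReal.ofReal ((1 + (m:ℝ) ^ 2) ^ (-t)) ≤
      (if m = 0 then 1 else 0) + ENNReal.ofReal (|(m:ℝ)| ^ (-(2 * t))) := by
    intro m
    rcases eq_or_ne m 0 with rfl | hm
    · simp only [if_pos rfl]
      refine le_add_right ?_
      calc ENNReal.ofReal ((1 + ((0:ℤ):ℝ) ^ 2) ^ (-t)) ≤ ENNReal.ofReal 1 := by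
            apply ENNReal.ofReal_le_ofReal
            have : (1 + ((0:ℤ):ℝ) ^ 2) = 1 := by norm_num
            rw [this, Real.one_rpow]
        _ = 1 := ENNReal.ofReal_one
    · rw [if_neg hm, zero_add]
      apply ENNReal.ofReal_le_ofReal
      have hmne : ((m:ℝ)) ≠ 0 := Int.cast_ne_zero.mpr hm
      have hm0 : (0:ℝ) < |(m:ℝ)| ^ 2 := by positivity
      have h1 : |(m:ℝ)| ^ 2 ≤ 1 + (m:ℝ) ^ 2 := by rw [sq_abs]; linarith
      have h2 : (|(m:ℝ)| ^ 2) ^ (-t) = |(m:ℝ)| ^ (-(2 * t)) := by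
        rw [← Real.rpow_natCast |(m:ℝ)| 2, ← Real.rpow_mul (abs_nonneg _)]
        norm_num
      calc (1 + (m:ℝ) ^ 2) ^ (-t) ≤ (|(m:ℝ)| ^ 2) ^ (-t) :=
            Real.rpow_le_rpow_of_nonpos hm0 h1 (by linarith)
        _ = |(m:ℝ)| ^ (-(2 * t)) := h2
  refine ne_top_of_le_ne_top ?_ (ENNReal.tsum_le_tsum hbound)
  rw [ENNReal.tsum_add, tsum_ite_eq, ← ENNReal.ofReal_tsum_of_nonneg
    (fun m => Real.rpow_nonneg (abs_nonneg _) _) hsum]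
  exact (ENNReal.add_lt_top.mpr ⟨ENNReal.one_lt_top, ENNReal.ofReal_lt_top⟩).ne

/-- Factorization of a product sum over `ℤⁿ`. -/
lemma tsum_pi_prod (g : ℤ → ℝ≥0∞) :
    ∀ m : ℕ, ∑' k : Fin m → ℤ, ∏ i, g (k i) = (∑' x : ℤ, g x) ^ m := by
  intro m
  induction m with
  | zero =>
    rw [pow_zero,
      tsum_eq_single (default : Fin 0 → ℤ) (fun b hb => absurd (Subsingleton.elim b default) hb)]
    simp
  | succ m ih =>
    rw [← (Fin.consEquiv (fun _ : Fin (m+1) => ℤ)).tsum_eq (fun k => ∏ i, g (k i))]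
    have hpt : ∀ p : ℤ × (Fin m → ℤ),
        (∏ i, g ((Fin.consEquiv (fun _ : Fin (m+1) => ℤ) p) i)) = g p.1 * ∏ i, g (p.2 i) := by
      rintro ⟨x, k'⟩
      rw [Fin.prod_univ_succ]
      simp [Fin.consEquiv]
    calc ∑' p : ℤ × (Fin m → ℤ), ∏ i, g ((Fin.consEquiv (fun _ : Fin (m+1) => ℤ) p) i)
        = ∑' p : ℤ × (Fin m → ℤ), g p.1 * ∏ i, g (p.2 i) := tsum_congr hpt
      _ = ∑' x : ℤ, ∑' k : Fin m → ℤ, g x * ∏ i, g (k i) :=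
          ENNReal.tsum_prod (f := fun (x : ℤ) (k : Fin m → ℤ) => g x * ∏ i, g (k i))
      _ = ∑' x : ℤ, g x * ∑' k : Fin m → ℤ, ∏ i, g (k i) :=
          tsum_congr fun x => ENNReal.tsum_mul_left
      _ = (∑' x : ℤ, g x) * (∑' x : ℤ, g x) ^ m := by rw [ENNReal.tsum_mul_right, ih]
      _ = (∑' x : ℤ, g x) ^ (m + 1) := by ring

/-- Pointwise AM–GM bound for `n ≥ 1`. -/
lemma jbZ_rpow_le_prod (hn : 0 < n) {r : ℝ} (hr0 : 0 ≤ r) (k : Fin n → ℤ) :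
    jbZ k ^ (-r) ≤ ∏ i, (1 + ((k i : ℝ)) ^ 2) ^ (-(r / (2 * n))) := by
  have hn' : (n:ℝ) ≠ 0 := Nat.cast_ne_zero.mpr hn.ne'
  have hn1 : (1:ℝ) ≤ (n:ℝ) := by exact_mod_cast hn
  set z : Fin n → ℝ := fun i => 1 + ((k i : ℝ)) ^ 2 with hz
  have hzpos : ∀ i, (0:ℝ) < z i := fun i => by
    have := sq_nonneg ((k i : ℝ)); simp only [hz]; linarith
  set P : ℝ := ∏ i, z i ^ (((n:ℝ))⁻¹) with hP
  have hPpos : 0 < P := Finset.prod_pos fun i _ => Real.rpow_pos_of_pos (hzpos i) _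
  have hgm : P ≤ 1 + ∑ i, ((k i : ℝ)) ^ 2 := by
    have h := Real.geom_mean_le_arith_mean_weighted Finset.univ (fun _ => ((n:ℝ))⁻¹) z
      (fun i _ => by positivity) (by
        rw [Finset.sum_const, Finset.card_univ, Fintype.card_fin, nsmul_eq_mul]
        field_simp) (fun i _ => (hzpos i).le)
    have hsum : ∑ i : Fin n, ((n:ℝ))⁻¹ * z i = 1 + (∑ i, ((k i : ℝ)) ^ 2) / n := by
      rw [← Finset.mul_sum]
      simp only [hz]
      rw [Finset.sum_add_distrib, Finset.sum_const, Finset.card_univ, Fintype.card_fin,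
        nsmul_eq_mul, mul_one]
      field_simp
    have hdiv : (∑ i, ((k i : ℝ)) ^ 2) / n ≤ ∑ i, ((k i : ℝ)) ^ 2 :=
      div_le_self (sumsq_nonneg k) hn1
    calc P ≤ ∑ i : Fin n, ((n:ℝ))⁻¹ * z i := by simpa using h
      _ = 1 + (∑ i, ((k i : ℝ)) ^ 2) / n := hsum
      _ ≤ 1 + ∑ i, ((k i : ℝ)) ^ 2 := by linarith
  have h1 : jbZ k ^ (-r) = (1 + ∑ i, ((k i : ℝ)) ^ 2) ^ (-(r/2)) := by
    rw [jbZ, ← Real.rpow_mul (by linarith [one_le_base k])]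
    congr 1
    ring
  have h2 : (1 + ∑ i, ((k i : ℝ)) ^ 2) ^ (-(r/2)) ≤ P ^ (-(r/2)) :=
    Real.rpow_le_rpow_of_nonpos hPpos hgm (neg_nonpos_of_nonneg (by positivity))
  have hexp : ((n:ℝ))⁻¹ * -(r/2) = -(r / (2 * n)) := by
    rw [mul_comm, neg_mul, ← div_eq_mul_inv, div_div]
  have h3 : P ^ (-(r/2)) = ∏ i, (z i) ^ (-(r / (2 * n))) := by
    rw [hP, ← Real.finset_prod_rpow _ _ (fun i _ => (Real.rpow_pos_of_pos (hzpos i) _).le)]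
    exact Finset.prod_congr rfl fun i _ => by rw [← Real.rpow_mul (hzpos i).le, hexp]
  rw [h1]
  exact h2.trans_eq h3

/-- Finiteness of `∑ ⟨k⟩^{-r}` for `r > n`. -/
lemma sum_wE_neg_rpow {r : ℝ} (hr : (n:ℝ) < r) : ∑' k : Fin n → ℤ, wE k ^ (-r) ≠ ∞ := by
  rcases Nat.eq_zero_or_pos n with rfl | hn
  · rw [tsum_eq_single (default : Fin 0 → ℤ)
      (fun b hb => absurd (Subsingleton.elim b default) hb)]
    rw [wE_rpow_eq]
    exact ENNReal.ofReal_ne_top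
  · have hr0 : (0:ℝ) ≤ r := le_trans (Nat.cast_nonneg n) hr.le
    have hb : ∀ k : Fin n → ℤ, wE k ^ (-r) ≤
        ∏ i, ENNReal.ofReal ((1 + ((k i : ℝ)) ^ 2) ^ (-(r / (2 * n)))) := by
      intro k
      rw [wE_rpow_eq, ← ENNReal.ofReal_prod_of_nonneg
        (fun i _ => Real.rpow_nonneg (by positivity) _)]
      exact ENNReal.ofReal_le_ofReal (jbZ_rpow_le_prod hn hr0 k)
    refine ne_top_of_le_ne_top ?_ (ENNReal.tsum_le_tsum hb)
    rw [tsum_pi_prod (fun x => ENNReal.ofReal ((1 + ((x : ℝ)) ^ 2) ^ (-(r / (2 * n))))) n]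
    refine ENNReal.pow_ne_top (onedim_sum ?_)
    rw [lt_div_iff₀ (by positivity : (0:ℝ) < 2 * (n:ℝ))]
    nlinarith

/-- Hölder for sums. -/
lemma tsum_mul_le {p p' : ℝ} (hpq : p'.HolderConjugate p) (f g : (Fin n → ℤ) → ℝ≥0∞) :
    ∑' k, f k * g k ≤ (∑' k, f k ^ p') ^ (1/p') * (∑' k, g k ^ p) ^ (1/p) := by
  have h := ENNReal.lintegral_mul_le_Lp_mul_Lq Measure.count hpq
    (measurable_of_countable f).aemeasurable (measurable_of_countable g).aemeasurable
  simpa [lintegral_count] using h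

lemma tsum_shift (h : (Fin n → ℤ) → ℝ≥0∞) (l : Fin n → ℤ) :
    ∑' k, h (k - l) = ∑' k, h k :=
  (Equiv.subRight l).tsum_eq h

lemma conv_comm (F G : (Fin n → ℤ) → ℝ≥0∞) (k : Fin n → ℤ) :
    ∑' l, F l * G (k - l) = ∑' l, G l * F (k - l) := by
  rw [← (Equiv.subLeft k).tsum_eq (fun l => F l * G (k - l))]
  refine tsum_congr fun l => ?_
  simp [Equiv.subLeft, mul_comm]

/-- Young's inequality `‖F ⋆ G‖_q ≤ ‖F‖₁ ‖G‖_q`. -/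
lemma QN_conv_le (hq : 1 ≤ q) (F G : (Fin n → ℤ) → ℝ≥0∞) :
    QN q (fun k => ∑' l, F l * G (k - l)) ≤ (∑' l, F l) * QN q G := by
  rcases eq_or_ne q ∞ with rfl | hqt
  · rw [QN, QN, if_pos rfl, if_pos rfl]
    refine iSup_le fun k => ?_
    calc ∑' l, F l * G (k - l) ≤ ∑' l, F l * ⨆ j, G j :=
          ENNReal.tsum_le_tsum fun l => mul_le_mul_right (le_iSup _ (k - l)) _
      _ = (∑' l, F l) * ⨆ j, G j := ENNReal.tsum_mul_right
  rcases eq_or_ne q 1 with rfl | hq1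
  · rw [QN, QN, if_neg hqt, if_neg hqt]
    simp only [ENNReal.toReal_one, ENNReal.rpow_one, one_div_one]
    refine le_of_eq ?_
    calc ∑' k, ∑' l, F l * G (k - l) = ∑' l, ∑' k, F l * G (k - l) := ENNReal.tsum_comm
      _ = ∑' l, F l * ∑' k, G (k - l) := tsum_congr fun l => ENNReal.tsum_mul_left
      _ = ∑' l, F l * ∑' k, G k := by
          refine tsum_congr fun l => ?_; rw [tsum_shift G l]
      _ = (∑' l, F l) * ∑' k, G k := ENNReal.tsum_mul_right
  · -- 1 < q < ∞
    set r := q.toReal with hrdef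
    have hq1' : (1:ℝ≥0∞) < q := lt_of_le_of_ne hq (Ne.symm hq1)
    have hr1 : 1 < r := by
      rw [hrdef, ← ENNReal.toReal_one]
      exact ENNReal.toReal_strict_mono hqt hq1'
    have hr0 : 0 < r := lt_trans one_pos hr1
    have hconj : (Real.conjExponent r).HolderConjugate r :=
      (Real.HolderConjugate.conjExponent hr1).symm
    set r' := Real.conjExponent r with hr'def
    have hr'0 : 0 < r' := hconj.pos
    have hinv : 1/r' + 1/r = 1 := by
      rw [one_div, one_div]; exact hconj.inv_add_inv_eq_one
    have hsum_eq : ∀ y : ℝ≥0∞, y ^ (1/r') * y ^ (1/r) = y := by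
      intro y
      rw [← ENNReal.rpow_add_of_nonneg _ _ (one_div_pos.mpr hr'0).le (one_div_pos.mpr hr0).le,
        hinv, ENNReal.rpow_one]
    have hcancel : ∀ y : ℝ≥0∞, (y ^ ((1:ℝ)/r)) ^ r = y := fun y => by
      rw [← ENNReal.rpow_mul, one_div, inv_mul_cancel₀ hr0.ne', ENNReal.rpow_one]
    have hcancel' : ∀ y : ℝ≥0∞, (y ^ ((1:ℝ)/r')) ^ r' = y := fun y => by
      rw [← ENNReal.rpow_mul, one_div, inv_mul_cancel₀ hr'0.ne', ENNReal.rpow_one]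
    have e1 : (1/r') * r = r - 1 := by
      have hinv' : 1/r' = 1 - 1/r := by linarith
      rw [hinv', sub_mul, one_mul, one_div, inv_mul_cancel₀ hr0.ne']
    have key : ∀ y S : ℝ≥0∞, (y ^ (r-1) * (y * S)) ^ (1/r) = y * S ^ (1/r) := by
      intro y S
      have h1 : y ^ (r-1) * y = y ^ r := by
        nth_rewrite 2 [← ENNReal.rpow_one y]
        rw [← ENNReal.rpow_add_of_nonneg _ _ (by linarith) zero_le_one, sub_add_cancel]
      rw [← mul_assoc, h1, ENNReal.mul_rpow_of_nonneg _ _ (one_div_pos.mpr hr0).le,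
        ← ENNReal.rpow_mul, mul_one_div_cancel hr0.ne', ENNReal.rpow_one]
    -- pointwise Hölder
    have hpt : ∀ k, ∑' l, F l * G (k - l) ≤
        (∑' l, F l) ^ (1/r') * (∑' l, F l * G (k - l) ^ r) ^ (1/r) := by
      intro k
      have hsplit : ∀ l, F l * G (k - l) = (F l ^ ((1:ℝ)/r')) * (F l ^ ((1:ℝ)/r) * G (k - l)) := by
        intro l
        rw [← mul_assoc, hsum_eq (F l)]
      calc ∑' l, F l * G (k - l)
          = ∑' l, (F l ^ ((1:ℝ)/r')) * (F l ^ ((1:ℝ)/r) * G (k - l)) := tsum_congr hsplit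
        _ ≤ (∑' l, (F l ^ ((1:ℝ)/r')) ^ r') ^ (1/r') *
            (∑' l, (F l ^ ((1:ℝ)/r) * G (k - l)) ^ r) ^ (1/r) := tsum_mul_le hconj _ _
        _ = (∑' l, F l) ^ (1/r') * (∑' l, F l * G (k - l) ^ r) ^ (1/r) := by
            congr 2
            · exact tsum_congr fun l => hcancel' (F l)
            · refine tsum_congr fun l => ?_
              rw [ENNReal.mul_rpow_of_nonneg _ _ hr0.le, hcancel (F l)]
    rw [QN, QN, if_neg hqt, if_neg hqt, ← hrdef]
    calc (∑' k, (∑' l, F l * G (k - l)) ^ r) ^ (1/r)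
        ≤ (∑' k, ((∑' l, F l) ^ (1/r') * (∑' l, F l * G (k - l) ^ r) ^ (1/r)) ^ r) ^ (1/r) :=
          ENNReal.rpow_le_rpow (ENNReal.tsum_le_tsum fun k =>
            ENNReal.rpow_le_rpow (hpt k) hr0.le) (by positivity)
      _ = ((∑' l, F l) ^ (r-1) * ∑' k, ∑' l, F l * G (k - l) ^ r) ^ (1/r) := by
          congr 1
          calc ∑' k, ((∑' l, F l) ^ (1/r') * (∑' l, F l * G (k - l) ^ r) ^ (1/r)) ^ r
              = ∑' k, (∑' l, F l) ^ (r-1) * ∑' l, F l * G (k - l) ^ r := by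
                refine tsum_congr fun k => ?_
                rw [ENNReal.mul_rpow_of_nonneg _ _ hr0.le, hcancel, ← ENNReal.rpow_mul, e1]
            _ = (∑' l, F l) ^ (r-1) * ∑' k, ∑' l, F l * G (k - l) ^ r := ENNReal.tsum_mul_left
      _ = ((∑' l, F l) ^ (r-1) * ((∑' l, F l) * ∑' k, G k ^ r)) ^ (1/r) := by
          congr 2
          calc ∑' k, ∑' l, F l * G (k - l) ^ r = ∑' l, ∑' k, F l * G (k - l) ^ r :=
                ENNReal.tsum_comm
            _ = ∑' l, F l * ∑' k, G (k - l) ^ r := tsum_congr fun l => ENNReal.tsum_mul_left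
            _ = ∑' l, F l * ∑' k, G k ^ r := by
                refine tsum_congr fun l => ?_
                rw [tsum_shift (fun k => G k ^ r) l]
            _ = (∑' l, F l) * ∑' k, G k ^ r := ENNReal.tsum_mul_right
      _ = (∑' l, F l) * (∑' k, G k ^ r) ^ (1/r) := key _ _

/-- The `ℓ^q_s ↪ ℓ¹` embedding. -/
lemma sum_le_QN {s : ℝ} (hq : 1 ≤ q) (hs0 : 0 ≤ s) (hs : (n : ℝ) * (1 - 1 / q.toReal) < s) :
    ∃ C : ℝ≥0∞, C ≠ ∞ ∧ ∀ f : (Fin n → ℤ) → ℝ≥0∞,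
      ∑' k, f k ≤ C * QN q (fun k => wE k ^ s * f k) := by
  have hfact : ∀ (f : (Fin n → ℤ) → ℝ≥0∞) k, f k = wE k ^ (-s) * (wE k ^ s * f k) := by
    intro f k
    rw [← mul_assoc, ← ENNReal.rpow_add _ _ (wE_ne_zero k) (wE_ne_top k), neg_add_cancel,
      ENNReal.rpow_zero, one_mul]
  rcases eq_or_ne q ∞ with rfl | hqt
  · have hn : (n:ℝ) < s := by simpa using hs
    refine ⟨∑' k : Fin n → ℤ, wE k ^ (-s), sum_wE_neg_rpow hn, fun f => ?_⟩
    rw [QN, if_pos rfl]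
    calc ∑' k, f k = ∑' k, wE k ^ (-s) * (wE k ^ s * f k) := tsum_congr (hfact f)
      _ ≤ ∑' k, wE k ^ (-s) * ⨆ j, wE j ^ s * f j :=
          ENNReal.tsum_le_tsum fun k => mul_le_mul_right (le_iSup (fun j => wE j ^ s * f j) k) _
      _ = (∑' k : Fin n → ℤ, wE k ^ (-s)) * ⨆ j, wE j ^ s * f j := ENNReal.tsum_mul_right
  rcases eq_or_ne q 1 with rfl | hq1
  · refine ⟨1, ENNReal.one_ne_top, fun f => ?_⟩
    rw [QN, if_neg hqt, one_mul]
    simp only [ENNReal.toReal_one, ENNReal.rpow_one, one_div_one]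
    exact ENNReal.tsum_le_tsum fun k =>
      le_mul_of_one_le_left zero_le (one_le_wE_rpow k hs0)
  · set r := q.toReal with hrdef
    have hq1' : (1:ℝ≥0∞) < q := lt_of_le_of_ne hq (Ne.symm hq1)
    have hr1 : 1 < r := by
      rw [hrdef, ← ENNReal.toReal_one]
      exact ENNReal.toReal_strict_mono hqt hq1'
    have hr0 : 0 < r := lt_trans one_pos hr1
    have hconj : (Real.conjExponent r).HolderConjugate r :=
      (Real.HolderConjugate.conjExponent hr1).symm
    set r' := Real.conjExponent r with hr'def
    have hr'0 : 0 < r' := hconj.pos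
    have hinv : 1/r' + 1/r = 1 := by
      rw [one_div, one_div]; exact hconj.inv_add_inv_eq_one
    have hns : (n:ℝ) < s * r' := by
      have hn1 : (n:ℝ) * (1/r') < s := by
        have : (1:ℝ)/r' = 1 - 1/r := by linarith
        rw [this]; exact hs
      have h2 := mul_lt_mul_of_pos_right hn1 hr'0
      calc (n:ℝ) = n * (1/r') * r' := by field_simp
        _ < s * r' := h2
    refine ⟨(∑' k : Fin n → ℤ, wE k ^ (-(s * r'))) ^ (1/r'),
      ENNReal.rpow_ne_top_of_nonneg (by positivity) (sum_wE_neg_rpow hns), fun f => ?_⟩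
    rw [QN, if_neg hqt, ← hrdef]
    calc ∑' k, f k = ∑' k, wE k ^ (-s) * (wE k ^ s * f k) := tsum_congr (hfact f)
      _ ≤ (∑' k, (wE k ^ (-s)) ^ r') ^ (1/r') * (∑' k, (wE k ^ s * f k) ^ r) ^ (1/r) :=
          tsum_mul_le hconj _ _
      _ = (∑' k : Fin n → ℤ, wE k ^ (-(s * r'))) ^ (1/r') *
          (∑' k, (wE k ^ s * f k) ^ r) ^ (1/r) := by
          congr 2
          exact tsum_congr fun k => by rw [← ENNReal.rpow_mul, neg_mul]

theorem lqs_convolution_algebra' (n : ℕ) (q : ℝ≥0∞) (s : ℝ)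
    (hq : 1 ≤ q) (hs0 : 0 ≤ s) (hs : (n : ℝ) * (1 - 1 / q.toReal) < s) :
    ∃ C : ℝ≥0, 0 < C ∧ ∀ a b : (Fin n → ℤ) → ℂ,
      lqsNorm q s a < ∞ → lqsNorm q s b < ∞ →
      (∀ k, Summable fun ℓ => a ℓ * b (k - ℓ)) ∧
      lqsNorm q s (fun k => ∑' ℓ, a ℓ * b (k - ℓ)) ≤ C * lqsNorm q s a * lqsNorm q s b := by
  obtain ⟨Ce, hCe, hCf⟩ := sum_le_QN (n := n) hq hs0 hs
  set D : ℝ≥0∞ := (2:ℝ≥0∞) ^ s * 2 * Ce with hD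
  have hDt : D ≠ ∞ := by
    rw [hD]
    exact ENNReal.mul_ne_top (ENNReal.mul_ne_top
      (ENNReal.rpow_ne_top_of_nonneg hs0 (by norm_num)) (by norm_num)) hCe
  refine ⟨D.toNNReal + 1, by positivity, fun a b ha hb => ?_⟩
  set Na : (Fin n → ℤ) → ℝ≥0∞ := fun k => (‖a k‖₊ : ℝ≥0∞) with hNa
  set Nb : (Fin n → ℤ) → ℝ≥0∞ := fun k => (‖b k‖₊ : ℝ≥0∞) with hNb
  set A : (Fin n → ℤ) → ℝ≥0∞ := fun k => wE k ^ s * Na k with hA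
  set B : (Fin n → ℤ) → ℝ≥0∞ := fun k => wE k ^ s * Nb k with hB
  rw [lqsNorm_eq hq s a] at ha
  rw [lqsNorm_eq hq s b] at hb
  have hQA : QN q A ≠ ∞ := ha.ne
  have hQB : QN q B ≠ ∞ := hb.ne
  have hNa_le : ∀ j, Na j ≤ A j := fun j =>
    le_mul_of_one_le_left zero_le (one_le_wE_rpow j hs0)
  have hNb_le : ∀ j, Nb j ≤ B j := fun j =>
    le_mul_of_one_le_left zero_le (one_le_wE_rpow j hs0)
  have hsa : ∑' k, Na k ≠ ∞ := by
    refine ne_top_of_le_ne_top (ENNReal.mul_ne_top hCe hQA) (hCf Na)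
  have hsb : ∑' k, Nb k ≠ ∞ := by
    refine ne_top_of_le_ne_top (ENNReal.mul_ne_top hCe hQB) (hCf Nb)
  -- summability of convolutions
  have hconvfin : ∀ k, ∑' l, Na l * Nb (k - l) ≠ ∞ := by
    intro k
    refine ne_top_of_le_ne_top (ENNReal.mul_ne_top hsa hQB) ?_
    calc ∑' l, Na l * Nb (k - l) ≤ ∑' l, Na l * QN q B :=
          ENNReal.tsum_le_tsum fun l => mul_le_mul_right
            ((hNb_le (k - l)).trans (le_QN hq B (k - l))) _
      _ = (∑' l, Na l) * QN q B := ENNReal.tsum_mul_right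
  have hsummable_nn : ∀ k, Summable fun l => ‖a l‖₊ * ‖b (k - l)‖₊ := by
    intro k
    rw [← ENNReal.tsum_coe_ne_top_iff_summable]
    simpa [ENNReal.coe_mul] using hconvfin k
  have hsummable : ∀ k, Summable fun l => a l * b (k - l) := by
    intro k
    apply Summable.of_nnnorm
    simpa [nnnorm_mul] using hsummable_nn k
  refine ⟨hsummable, ?_⟩
  -- pointwise bound
  set c : (Fin n → ℤ) → ℂ := fun k => ∑' l, a l * b (k - l) with hc
  have hnc : ∀ k, (‖c k‖₊ : ℝ≥0∞) ≤ ∑' l, Na l * Nb (k - l) := by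
    intro k
    calc (‖c k‖₊ : ℝ≥0∞)
        ≤ ((∑' l, ‖a l * b (k - l)‖₊ : ℝ≥0) : ℝ≥0∞) := by
          exact_mod_cast ENNReal.coe_le_coe.mpr (nnnorm_tsum_le (by
            simpa [nnnorm_mul] using hsummable_nn k))
      _ = ∑' l, ((‖a l * b (k - l)‖₊ : ℝ≥0) : ℝ≥0∞) :=
          ENNReal.coe_tsum (by simpa [nnnorm_mul] using hsummable_nn k)
      _ = ∑' l, Na l * Nb (k - l) := by
          refine tsum_congr fun l => ?_
          rw [nnnorm_mul, ENNReal.coe_mul]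
  have hpt : ∀ k, wE k ^ s * (‖c k‖₊ : ℝ≥0∞) ≤
      (2:ℝ≥0∞) ^ s * ((∑' l, A l * Nb (k - l)) + ∑' l, Na l * B (k - l)) := by
    intro k
    calc wE k ^ s * (‖c k‖₊ : ℝ≥0∞) ≤ wE k ^ s * ∑' l, Na l * Nb (k - l) :=
          mul_le_mul_right (hnc k) _
      _ = ∑' l, wE k ^ s * (Na l * Nb (k - l)) := ENNReal.tsum_mul_left.symm
      _ ≤ ∑' l, ((2:ℝ≥0∞) ^ s * (wE l ^ s + wE (k - l) ^ s)) * (Na l * Nb (k - l)) :=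
          ENNReal.tsum_le_tsum fun l => mul_le_mul_left (wE_peetre hs0 k l) _
      _ = ∑' l, (2:ℝ≥0∞) ^ s * (A l * Nb (k - l) + Na l * B (k - l)) := by
          refine tsum_congr fun l => ?_
          rw [hA, hB]
          ring
      _ = (2:ℝ≥0∞) ^ s * ((∑' l, A l * Nb (k - l)) + ∑' l, Na l * B (k - l)) := by
          rw [ENNReal.tsum_mul_left, ENNReal.tsum_add]
  -- assemble
  have hconv1 : QN q (fun k => ∑' l, A l * Nb (k - l)) ≤ (Ce * QN q B) * QN q A := by
    have : (fun k => ∑' l, A l * Nb (k - l)) = fun k => ∑' l, Nb l * A (k - l) := by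
      funext k; exact conv_comm A Nb k
    rw [this]
    calc QN q (fun k => ∑' l, Nb l * A (k - l)) ≤ (∑' l, Nb l) * QN q A :=
          QN_conv_le hq Nb A
      _ ≤ (Ce * QN q B) * QN q A := mul_le_mul_left (hCf Nb) _
  have hconv2 : QN q (fun k => ∑' l, Na l * B (k - l)) ≤ (Ce * QN q A) * QN q B := by
    calc QN q (fun k => ∑' l, Na l * B (k - l)) ≤ (∑' l, Na l) * QN q B :=
          QN_conv_le hq Na B
      _ ≤ (Ce * QN q A) * QN q B := mul_le_mul_left (hCf Na) _
  have hmain : lqsNorm q s c ≤ D * (QN q A * QN q B) := by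
    rw [lqsNorm_eq hq s c]
    calc QN q (fun k => wE k ^ s * (‖c k‖₊ : ℝ≥0∞))
        ≤ QN q (fun k => (2:ℝ≥0∞) ^ s *
            ((∑' l, A l * Nb (k - l)) + ∑' l, Na l * B (k - l))) := QN_mono hpt
      _ ≤ (2:ℝ≥0∞) ^ s * QN q (fun k =>
            (∑' l, A l * Nb (k - l)) + ∑' l, Na l * B (k - l)) := QN_const_mul hq _ _
      _ ≤ (2:ℝ≥0∞) ^ s * (QN q (fun k => ∑' l, A l * Nb (k - l)) +
            QN q (fun k => ∑' l, Na l * B (k - l))) :=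
          mul_le_mul_right (QN_add_le hq _ _) _
      _ ≤ (2:ℝ≥0∞) ^ s * ((Ce * QN q B) * QN q A + (Ce * QN q A) * QN q B) :=
          mul_le_mul_right (add_le_add hconv1 hconv2) _
      _ = D * (QN q A * QN q B) := by rw [hD]; ring
  have hcoe : ((D.toNNReal + 1 : ℝ≥0) : ℝ≥0∞) = D + 1 := by
    rw [ENNReal.coe_add, ENNReal.coe_toNNReal hDt, ENNReal.coe_one]
  rw [lqsNorm_eq hq s a, lqsNorm_eq hq s b]
  calc lqsNorm q s c ≤ D * (QN q A * QN q B) := hmain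
    _ ≤ (D + 1) * (QN q A * QN q B) := mul_le_mul_left (le_self_add) _
    _ = ((D.toNNReal + 1 : ℝ≥0) : ℝ≥0∞) * QN q A * QN q B := by rw [hcoe, mul_assoc]

end LqsAux

/-- For `1 ≤ q ≤ ∞`, `s ≥ 0`, `s > n/q′`, the space `ℓ^q_s(ℤⁿ)` is a
convolution algebra: for `a, b ∈ ℓ^q_s` the convolution `(a∗b)_k = Σ_ℓ a_ℓ b_{k−ℓ}` is
well-defined and `‖a∗b‖_{ℓ^q_s} ≤ C ‖a‖_{ℓ^q_s} ‖b‖_{ℓ^q_s}`. -/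
theorem lqs_convolution_algebra (n : ℕ) (q : ℝ≥0∞) (s : ℝ)
    (hq : 1 ≤ q) (hs0 : 0 ≤ s) (hs : (n : ℝ) * (1 - 1 / q.toReal) < s) :
    ∃ C : ℝ≥0, 0 < C ∧ ∀ a b : (Fin n → ℤ) → ℂ,
      lqsNorm q s a < ∞ → lqsNorm q s b < ∞ →
      (∀ k, Summable fun ℓ => a ℓ * b (k - ℓ)) ∧
      lqsNorm q s (fun k => ∑' ℓ, a ℓ * b (k - ℓ)) ≤ C * lqsNorm q s a * lqsNorm q s b :=
  LqsAux.lqs_convolution_algebra' n q s hq hs0 hs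
end
end

section
/- Let 1 < q ≤ ∞ and s ∈ ℝ. If the convolution embedding ℓ^q_s(ℤⁿ) ∗ ℓ^q_s(ℤⁿ) ↪ ℓ^q_s(ℤⁿ) holds, i.e., there exists C > 0 such that ‖a∗b‖_{ℓ^q_s} ≤ C‖a‖_{ℓ^q_s}‖b‖_{ℓ^q_s} for all finitely supported nonnegative sequences a, b on ℤⁿ, then necessarily s > n/q′. -/
open MeasureTheory
open scoped ENNReal NNReal

noncomputable section

/-- The weighted norm `‖a‖_{ℓ^q_s}` for real-valued sequences on `ℤⁿ`. -/
def lqsNormR {n : ℕ} (q : ℝ≥0∞) (s : ℝ) (a : (Fin n → ℤ) → ℝ) : ℝ≥0∞ :=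
  eLpNorm (fun k => jbZ k ^ s * |a k|) q Measure.count

namespace ConvAux

abbrev Zn (n : ℕ) := Fin n → ℤ

def X {n : ℕ} (k : Zn n) : ℝ := 1 + ∑ i, ((k i : ℝ)) ^ 2

lemma one_le_X {n : ℕ} (k : Zn n) : 1 ≤ X k :=
  le_add_of_nonneg_right (Finset.sum_nonneg fun i _ => sq_nonneg _)

lemma X_pos {n : ℕ} (k : Zn n) : 0 < X k := lt_of_lt_of_le one_pos (one_le_X k)

lemma jbZ_eq {n : ℕ} (k : Zn n) : jbZ k = X k ^ ((1:ℝ)/2) := rfl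

lemma jbZ_rpow {n : ℕ} (k : Zn n) (e : ℝ) : jbZ k ^ e = X k ^ (e/2) := by
  rw [jbZ_eq, ← Real.rpow_mul (X_pos k).le]
  ring_nf

lemma one_le_jbZ {n : ℕ} (k : Zn n) : 1 ≤ jbZ k :=
  Real.one_le_rpow (one_le_X k) (by norm_num)

lemma jbZ_pos {n : ℕ} (k : Zn n) : 0 < jbZ k := lt_of_lt_of_le one_pos (one_le_jbZ k)

lemma jbZ_rpow_nonneg {n : ℕ} (k : Zn n) (e : ℝ) : 0 ≤ jbZ k ^ e :=
  Real.rpow_nonneg (jbZ_pos k).le e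

/-- a cube in `ℤⁿ` with all coordinates in `[lo, hi]`. -/
def cube (n : ℕ) (lo hi : ℤ) : Finset (Zn n) := Finset.Icc (fun _ => lo) (fun _ => hi)

lemma mem_cube {n : ℕ} {lo hi : ℤ} {k : Zn n} :
    k ∈ cube n lo hi ↔ ∀ i, lo ≤ k i ∧ k i ≤ hi := by
  simp [cube, Finset.mem_Icc, Pi.le_def, forall_and]

lemma card_cube (n : ℕ) (lo hi : ℤ) : (cube n lo hi).card = ((hi + 1 - lo).toNat) ^ n := by
  simp [cube, Pi.card_Icc, Int.card_Icc]

section count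

variable {α : Type*} [MeasurableSpace α] [MeasurableSingletonClass α] [Countable α]

lemma count_ae {P : α → Prop} (h : ∀ᵐ x ∂(Measure.count : Measure α), P x) (x : α) : P x := by
  by_contra hx
  rw [Filter.eventually_iff, mem_ae_iff] at h
  rw [Measure.count_eq_zero_iff] at h
  exact Set.eq_empty_iff_forall_notMem.mp h x hx

lemma eLpNorm_count_eq (f : α → ℝ) (hf : ∀ k, 0 ≤ f k) (t : Finset α)
    (ht : ∀ k ∉ t, f k = 0) {q : ℝ≥0∞} (h0 : q ≠ 0) (htop : q ≠ ∞) :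
    eLpNorm f q Measure.count
      = ENNReal.ofReal ((∑ k ∈ t, f k ^ q.toReal) ^ (1/q.toReal)) := by
  have hp : 0 < q.toReal := ENNReal.toReal_pos h0 htop
  rw [eLpNorm_eq_lintegral_rpow_enorm_toReal h0 htop, lintegral_count]
  rw [tsum_eq_sum (s := t) (fun b hb => by simp [ht b hb, ENNReal.zero_rpow_of_pos hp])]
  have hsum : ∀ k ∈ t, (‖f k‖ₑ) ^ q.toReal = ENNReal.ofReal (f k ^ q.toReal) := by
    intro k _
    rw [← ofReal_norm, Real.norm_of_nonneg (hf k),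
      ENNReal.ofReal_rpow_of_nonneg (hf k) hp.le]
  rw [Finset.sum_congr rfl hsum, ← ENNReal.ofReal_sum_of_nonneg
    (fun k _ => Real.rpow_nonneg (hf k) _),
    ENNReal.ofReal_rpow_of_nonneg (Finset.sum_nonneg fun k _ => Real.rpow_nonneg (hf k) _)
      (by positivity)]

lemma eLpNorm_count_ge (f : α → ℝ) (M : Finset α) {q : ℝ≥0∞} (h0 : q ≠ 0) (htop : q ≠ ∞) :
    ENNReal.ofReal ((∑ k ∈ M, |f k| ^ q.toReal) ^ (1/q.toReal))
      ≤ eLpNorm f q Measure.count := by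
  have hp : 0 < q.toReal := ENNReal.toReal_pos h0 htop
  rw [eLpNorm_eq_lintegral_rpow_enorm_toReal h0 htop, lintegral_count]
  rw [← ENNReal.ofReal_rpow_of_nonneg (Finset.sum_nonneg fun k _ => Real.rpow_nonneg (abs_nonneg _) _)
    (by positivity)]
  refine ENNReal.rpow_le_rpow ?_ (by positivity)
  rw [ENNReal.ofReal_sum_of_nonneg (fun k _ => Real.rpow_nonneg (abs_nonneg _) _)]
  refine le_trans (le_of_eq (Finset.sum_congr rfl ?_)) (ENNReal.sum_le_tsum M)
  intro k _
  rw [← ofReal_norm, Real.norm_eq_abs,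
    ENNReal.ofReal_rpow_of_nonneg (abs_nonneg _) hp.le]

lemma eLpNorm_count_top_le (f : α → ℝ) (c : ℝ) (h : ∀ k, ‖f k‖ ≤ c) :
    eLpNorm f ∞ Measure.count ≤ ENNReal.ofReal c := by
  rw [eLpNorm_exponent_top]
  exact eLpNormEssSup_le_of_ae_bound (Filter.Eventually.of_forall h)

lemma eLpNorm_count_top_ge (f : α → ℝ) (k₀ : α) :
    ENNReal.ofReal |f k₀| ≤ eLpNorm f ∞ Measure.count := by
  have h := count_ae (enorm_ae_le_eLpNormEssSup f Measure.count) k₀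
  rw [eLpNorm_exponent_top]
  calc ENNReal.ofReal |f k₀| = ‖f k₀‖ₑ := by
        rw [← ofReal_norm, Real.norm_eq_abs]
    _ ≤ _ := h

end count
end ConvAux

namespace ConvAux

variable {n : ℕ}

/-- test sequence `a`: `⟨k⟩^{-σ}` on the cube `[-N,N]ⁿ`. -/
def testA (n : ℕ) (σ : ℝ) (N : ℤ) (k : Zn n) : ℝ :=
  if k ∈ cube n (-N) N then jbZ k ^ (-σ) else 0

/-- test sequence `b`: indicator of the cube `[N,5N]ⁿ`. -/
def testB (n : ℕ) (N : ℤ) (k : Zn n) : ℝ := if k ∈ cube n N (5*N) then 1 else 0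

def AA (n : ℕ) (σ : ℝ) (N : ℤ) : ℝ := ∑ k ∈ cube n (-N) N, jbZ k ^ (-σ)

def SS (n : ℕ) (N : ℤ) : ℝ := ∑ k ∈ cube n (-N) N, jbZ k ^ (-(n:ℝ))

lemma testA_nonneg (σ : ℝ) (N : ℤ) (k : Zn n) : 0 ≤ testA n σ N k := by
  unfold testA; split
  · exact jbZ_rpow_nonneg k _
  · exact le_refl 0

lemma testB_nonneg (N : ℤ) (k : Zn n) : 0 ≤ testB n N k := by
  unfold testB; split <;> norm_num

lemma testA_support (σ : ℝ) (N : ℤ) : (Function.support (testA n σ N)).Finite := by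
  apply Set.Finite.subset (cube n (-N) N).finite_toSet
  intro k hk
  simp only [Function.mem_support, testA] at hk
  by_contra h
  exact hk (if_neg h)

lemma testB_support (N : ℤ) : (Function.support (testB n N)).Finite := by
  apply Set.Finite.subset (cube n N (5*N)).finite_toSet
  intro k hk
  simp only [Function.mem_support, testB] at hk
  by_contra h
  exact hk (if_neg h)

lemma conv_eq (σ : ℝ) (N : ℤ) (hN : 0 ≤ N) {k : Zn n} (hk : k ∈ cube n (2*N) (3*N)) :
    (∑' ℓ, testA n σ N ℓ * testB n N (k - ℓ)) = AA n σ N := by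
  rw [tsum_eq_sum (s := cube n (-N) N) (fun ℓ hℓ => by rw [testA, if_neg hℓ, zero_mul])]
  refine Finset.sum_congr rfl fun ℓ hℓ => ?_
  rw [testA, if_pos hℓ, testB, if_pos, mul_one]
  rw [mem_cube] at hℓ hk ⊢
  intro i
  have h1 := hℓ i
  have h2 := hk i
  have : (k - ℓ) i = k i - ℓ i := rfl
  omega

lemma SS_le_AA {σ : ℝ} (hσ : σ ≤ n) (N : ℤ) : SS n N ≤ AA n σ N :=
  Finset.sum_le_sum fun k _ =>
    Real.rpow_le_rpow_of_exponent_le (one_le_jbZ k) (neg_le_neg hσ)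

lemma AA_nonneg (σ : ℝ) (N : ℤ) : 0 ≤ AA n σ N :=
  Finset.sum_nonneg fun k _ => jbZ_rpow_nonneg k _

lemma one_le_SS (N : ℤ) (hN : 0 ≤ N) : 1 ≤ SS n N := by
  have h0 : (0 : Zn n) ∈ cube n (-N) N := by
    rw [mem_cube]; intro i; simp only [Pi.zero_apply]; omega
  have hj : jbZ (0 : Zn n) ^ (-(n:ℝ)) = 1 := by
    rw [jbZ_rpow]
    have : X (0 : Zn n) = 1 := by simp [X]
    rw [this, Real.one_rpow]
  calc (1:ℝ) = jbZ (0 : Zn n) ^ (-(n:ℝ)) := hj.symm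
    _ ≤ SS n N := Finset.single_le_sum (fun k _ => jbZ_rpow_nonneg k _) h0

/-- lower/upper bound for the weight on the cube `[N,5N]ⁿ`. -/
def Wlo (n : ℕ) (s : ℝ) (N : ℤ) : ℝ :=
  min ((1 + n*(N:ℝ)^2) ^ (s/2)) ((1 + 25*n*(N:ℝ)^2) ^ (s/2))

def Whi (n : ℕ) (s : ℝ) (N : ℤ) : ℝ :=
  max ((1 + n*(N:ℝ)^2) ^ (s/2)) ((1 + 25*n*(N:ℝ)^2) ^ (s/2))

lemma base1_pos (N : ℤ) : (0:ℝ) < 1 + n*(N:ℝ)^2 := by positivity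

lemma base2_pos (N : ℤ) : (0:ℝ) < 1 + 25*n*(N:ℝ)^2 := by positivity

lemma Wlo_pos (s : ℝ) (N : ℤ) : 0 < Wlo n s N :=
  lt_min (Real.rpow_pos_of_pos (base1_pos N) _) (Real.rpow_pos_of_pos (base2_pos N) _)

lemma Whi_pos (s : ℝ) (N : ℤ) : 0 < Whi n s N :=
  lt_of_lt_of_le (Wlo_pos s N) (min_le_max)

lemma X_bounds {N : ℤ} (hN : 0 ≤ N) {k : Zn n} (hk : k ∈ cube n N (5*N)) :
    1 + n*(N:ℝ)^2 ≤ X k ∧ X k ≤ 1 + 25*n*(N:ℝ)^2 := by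
  rw [mem_cube] at hk
  have hsq : ∀ i, (N:ℝ)^2 ≤ ((k i : ℝ))^2 ∧ ((k i : ℝ))^2 ≤ 25*(N:ℝ)^2 := by
    intro i
    obtain ⟨h1, h2⟩ := hk i
    have hN' : (0:ℝ) ≤ (N:ℝ) := by exact_mod_cast hN
    have h1' : (N:ℝ) ≤ (k i : ℝ) := by exact_mod_cast h1
    have h2' : ((k i : ℝ)) ≤ 5*(N:ℝ) := by exact_mod_cast h2
    constructor
    · exact pow_le_pow_left₀ hN' h1' 2
    · calc ((k i : ℝ))^2 ≤ (5*(N:ℝ))^2 := pow_le_pow_left₀ (le_trans hN' h1') h2' 2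
        _ = 25*(N:ℝ)^2 := by ring
  constructor
  · have : (n:ℝ)*(N:ℝ)^2 ≤ ∑ i, ((k i : ℝ))^2 := by
      calc (n:ℝ)*(N:ℝ)^2 = ∑ _i : Fin n, (N:ℝ)^2 := by
            rw [Finset.sum_const, Finset.card_univ, Fintype.card_fin, nsmul_eq_mul]
        _ ≤ _ := Finset.sum_le_sum fun i _ => (hsq i).1
    unfold X; linarith
  · have : ∑ i, ((k i : ℝ))^2 ≤ (n:ℝ)*(25*(N:ℝ)^2) := by
      calc ∑ i, ((k i : ℝ))^2 ≤ ∑ _i : Fin n, 25*(N:ℝ)^2 :=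
            Finset.sum_le_sum fun i _ => (hsq i).2
        _ = (n:ℝ)*(25*(N:ℝ)^2) := by
            rw [Finset.sum_const, Finset.card_univ, Fintype.card_fin, nsmul_eq_mul]
    unfold X; linarith

lemma weight_sandwich (s : ℝ) {N : ℤ} (hN : 0 ≤ N) {k : Zn n} (hk : k ∈ cube n N (5*N)) :
    Wlo n s N ≤ jbZ k ^ s ∧ jbZ k ^ s ≤ Whi n s N := by
  obtain ⟨hx1, hx2⟩ := X_bounds hN hk
  rw [jbZ_rpow]
  rcases le_or_gt 0 (s/2) with he | he
  · constructor
    · exact le_trans (min_le_left _ _) (Real.rpow_le_rpow (base1_pos N).le hx1 he)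
    · exact le_trans (Real.rpow_le_rpow (X_pos k).le hx2 he) (le_max_right _ _)
  · constructor
    · exact le_trans (min_le_right _ _) (Real.rpow_le_rpow_of_nonpos (X_pos k) hx2 he.le)
    · exact le_trans (Real.rpow_le_rpow_of_nonpos (base1_pos N) hx1 he.le) (le_max_left _ _)

lemma Whi_le (s : ℝ) (N : ℤ) : Whi n s N ≤ 25 ^ (|s|/2) * Wlo n s N := by
  have hb : (1 + 25*n*(N:ℝ)^2) ≤ 25 * (1 + n*(N:ℝ)^2) := by
    have : (0:ℝ) ≤ n*(N:ℝ)^2 := by positivity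
    linarith
  have h25 : ((25:ℝ)*(1 + n*(N:ℝ)^2)) ^ (s/2) = 25 ^ (s/2) * (1 + n*(N:ℝ)^2) ^ (s/2) :=
    Real.mul_rpow (by norm_num) (base1_pos N).le
  rcases le_or_gt 0 s with hs | hs
  · have he : (0:ℝ) ≤ s/2 := by linarith
    have hmono : (1 + n*(N:ℝ)^2) ^ (s/2) ≤ (1 + 25*n*(N:ℝ)^2) ^ (s/2) :=
      Real.rpow_le_rpow (base1_pos N).le (by nlinarith : (1 + n*(N:ℝ)^2) ≤ 1 + 25*n*(N:ℝ)^2) he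
    rw [Whi, max_eq_right hmono, Wlo, min_eq_left hmono, abs_of_nonneg hs]
    calc (1 + 25*n*(N:ℝ)^2) ^ (s/2) ≤ ((25:ℝ)*(1 + n*(N:ℝ)^2)) ^ (s/2) :=
          Real.rpow_le_rpow (base2_pos N).le hb he
      _ = 25 ^ (s/2) * (1 + n*(N:ℝ)^2) ^ (s/2) := h25
  · have he : s/2 ≤ 0 := by linarith
    have hmono : (1 + 25*n*(N:ℝ)^2) ^ (s/2) ≤ (1 + n*(N:ℝ)^2) ^ (s/2) :=
      Real.rpow_le_rpow_of_nonpos (base1_pos N) (by nlinarith : (1 + n*(N:ℝ)^2) ≤ 1 + 25*n*(N:ℝ)^2) he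
    rw [Whi, max_eq_left hmono, Wlo, min_eq_right hmono, abs_of_neg hs]
    have key : ((25:ℝ)*(1 + n*(N:ℝ)^2)) ^ (s/2) ≤ (1 + 25*n*(N:ℝ)^2) ^ (s/2) :=
      Real.rpow_le_rpow_of_nonpos (by positivity) hb he
    have h1 : (1 + n*(N:ℝ)^2) ^ (s/2)
        = 25 ^ (-s/2) * (((25:ℝ)*(1 + n*(N:ℝ)^2)) ^ (s/2)) := by
      rw [h25, ← mul_assoc, ← Real.rpow_add (by norm_num : (0:ℝ) < 25), neg_div, neg_add_cancel,
        Real.rpow_zero, one_mul]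
    rw [h1]
    refine mul_le_mul_of_nonneg_left key (Real.rpow_nonneg (by norm_num) _)

lemma cardM_eq (N : ℤ) (hN : 0 ≤ N) :
    (cube n (2*N) (3*N)).card = ((N+1).toNat) ^ n := by
  rw [card_cube]; congr 1; omega

lemma cardQ_eq (N : ℤ) :
    (cube n N (5*N)).card = ((4*N+1).toNat) ^ n := by
  rw [card_cube]; congr 1; omega

lemma cardQ_le (N : ℤ) (hN : 0 ≤ N) :
    (cube n N (5*N)).card ≤ 5 ^ n * (cube n (2*N) (3*N)).card := by
  rw [cardM_eq N hN, cardQ_eq, ← mul_pow]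
  refine Nat.pow_le_pow_left ?_ n
  omega

lemma cardM_pos (N : ℤ) (hN : 0 ≤ N) : 0 < (cube n (2*N) (3*N)).card := by
  rw [cardM_eq N hN]
  exact pow_pos (by omega) n

end ConvAux

namespace ConvAux

/-- a "shell": first coordinate equal to `m`, remaining coordinates in `[0, m-1]`. -/
def shell (d : ℕ) (m : ℕ) : Finset (Zn (d+1)) :=
  Finset.Icc (Fin.cons (m:ℤ) (fun _ => 0)) (Fin.cons (m:ℤ) (fun _ => (m:ℤ) - 1))

lemma mem_shell {d m : ℕ} {k : Zn (d+1)} :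
    k ∈ shell d m ↔ k 0 = (m:ℤ) ∧ ∀ j : Fin d, 0 ≤ k j.succ ∧ k j.succ ≤ (m:ℤ) - 1 := by
  rw [shell, Finset.mem_Icc, Pi.le_def, Pi.le_def]
  constructor
  · rintro ⟨h1, h2⟩
    refine ⟨le_antisymm ?_ ?_, fun j => ⟨?_, ?_⟩⟩
    · simpa using h2 0
    · simpa using h1 0
    · simpa using h1 j.succ
    · simpa using h2 j.succ
  · rintro ⟨h1, h2⟩
    constructor
    · intro i
      refine Fin.cases ?_ (fun j => ?_) i
      · simp [h1]
      · simpa using (h2 j).1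
    · intro i
      refine Fin.cases ?_ (fun j => ?_) i
      · simp [h1]
      · simpa using (h2 j).2

lemma card_shell (d : ℕ) {m : ℕ} (hm : 1 ≤ m) : (shell d m).card = m ^ d := by
  rw [shell, Pi.card_Icc, Fin.prod_univ_succ]
  simp only [Fin.cons_zero, Fin.cons_succ, Int.card_Icc]
  rw [show ((m:ℤ) + 1 - m).toNat = 1 by omega]
  rw [show ((m:ℤ) - 1 + 1 - 0).toNat = m by omega]
  simp

lemma shell_subset {d : ℕ} {m : ℕ} {N : ℤ} (hm : 1 ≤ m) (hmN : (m:ℤ) ≤ N) :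
    shell d m ⊆ cube (d+1) (-N) N := by
  intro k hk
  rw [mem_shell] at hk
  rw [mem_cube]
  intro i
  refine Fin.cases ?_ (fun j => ?_) i
  · rw [hk.1]; omega
  · have := hk.2 j; omega

lemma shell_term_ge {d : ℕ} {m : ℕ} (hm : 1 ≤ m) {k : Zn (d+1)} (hk : k ∈ shell d m) :
    ((d:ℝ)+2) ^ (-((d:ℝ)+1)/2) * (m:ℝ) ^ (-((d:ℝ)+1)) ≤ jbZ k ^ (-(((d+1:ℕ)):ℝ)) := by
  have hm' : (0:ℝ) < (m:ℝ) := by exact_mod_cast hm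
  have hXle : X k ≤ ((d:ℝ)+2) * (m:ℝ)^2 := by
    rw [mem_shell] at hk
    have hsq : ∀ i, ((k i : ℝ))^2 ≤ (m:ℝ)^2 := by
      intro i
      refine Fin.cases ?_ (fun j => ?_) i
      · rw [hk.1]; norm_num
      · have h := hk.2 j
        have h1 : |(k j.succ : ℝ)| ≤ (m:ℝ) := by
          rw [abs_le]
          constructor
          · have hz : -(m:ℤ) ≤ k j.succ := by omega
            exact_mod_cast hz
          · have hz : k j.succ ≤ (m:ℤ) := by omega
            exact_mod_cast hz
        calc ((k j.succ : ℝ))^2 = |(k j.succ : ℝ)|^2 := (sq_abs _).symm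
          _ ≤ (m:ℝ)^2 := pow_le_pow_left₀ (abs_nonneg _) h1 2
    have hsum : ∑ i, ((k i : ℝ))^2 ≤ ((d:ℝ)+1) * (m:ℝ)^2 := by
      calc ∑ i, ((k i : ℝ))^2 ≤ ∑ _i : Fin (d+1), (m:ℝ)^2 :=
            Finset.sum_le_sum fun i _ => hsq i
        _ = ((d:ℝ)+1) * (m:ℝ)^2 := by
            rw [Finset.sum_const, Finset.card_univ, Fintype.card_fin, nsmul_eq_mul]
            push_cast; ring
    have hm1 : (1:ℝ) ≤ (m:ℝ) := by exact_mod_cast hm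
    have hm2 : (1:ℝ) ≤ (m:ℝ)^2 := by nlinarith
    unfold X; nlinarith
  have hXpos := X_pos k
  have hcast : (-(((d+1:ℕ)):ℝ)) = -((d:ℝ)+1) := by push_cast; ring
  rw [jbZ_rpow, hcast]
  have he2 : -((d:ℝ)+1)/2 ≤ 0 := by
    have : (0:ℝ) ≤ (d:ℝ)+1 := by positivity
    linarith
  have step1 : (((d:ℝ)+2) * (m:ℝ)^2) ^ (-((d:ℝ)+1)/2) ≤ X k ^ (-((d:ℝ)+1)/2) :=
    Real.rpow_le_rpow_of_nonpos hXpos hXle he2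
  refine le_trans (le_of_eq ?_) step1
  rw [Real.mul_rpow (by positivity) (by positivity)]
  congr 1
  rw [← Real.rpow_natCast (m:ℝ) 2, ← Real.rpow_mul hm'.le]
  congr 1
  push_cast; ring

lemma shell_sum_ge (d : ℕ) {m : ℕ} (hm : 1 ≤ m) :
    ((d:ℝ)+2) ^ (-((d:ℝ)+1)/2) * (1/(m:ℝ))
      ≤ ∑ k ∈ shell d m, jbZ k ^ (-(((d+1:ℕ)):ℝ)) := by
  have hm' : (0:ℝ) < (m:ℝ) := by exact_mod_cast hm
  have h1 : (shell d m).card • (((d:ℝ)+2) ^ (-((d:ℝ)+1)/2) * (m:ℝ) ^ (-((d:ℝ)+1)))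
      ≤ ∑ k ∈ shell d m, jbZ k ^ (-(((d+1:ℕ)):ℝ)) :=
    Finset.card_nsmul_le_sum _ _ _ (fun k hk => shell_term_ge hm hk)
  refine le_trans (le_of_eq ?_) h1
  rw [card_shell d hm, nsmul_eq_mul]
  push_cast
  rw [← Real.rpow_natCast (m:ℝ) d]
  rw [show ((m:ℝ) ^ (d:ℝ)) * (((d:ℝ)+2) ^ (-((d:ℝ)+1)/2) * (m:ℝ) ^ (-((d:ℝ)+1)))
      = ((d:ℝ)+2) ^ (-((d:ℝ)+1)/2) * ((m:ℝ) ^ (d:ℝ) * (m:ℝ) ^ (-((d:ℝ)+1))) by ring]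
  rw [← Real.rpow_add hm', show (d:ℝ) + -((d:ℝ)+1) = -1 by ring, Real.rpow_neg_one]
  rw [one_div]

lemma SS_ge_harmonic (d : ℕ) (N : ℕ) :
    ((d:ℝ)+2) ^ (-((d:ℝ)+1)/2) * (∑ m ∈ Finset.Icc 1 N, 1/(m:ℝ)) ≤ SS (d+1) (N:ℤ) := by
  classical
  have hdisj : ∀ m₁ ∈ Finset.Icc 1 N, ∀ m₂ ∈ Finset.Icc 1 N, m₁ ≠ m₂ →
      Disjoint (shell d m₁) (shell d m₂) := by
    intro m₁ _ m₂ _ hne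
    rw [Finset.disjoint_left]
    intro k hk1 hk2
    rw [mem_shell] at hk1 hk2
    exact hne (by exact_mod_cast hk1.1.symm.trans hk2.1)
  have hsub : (Finset.Icc 1 N).biUnion (shell d) ⊆ cube (d+1) (-(N:ℤ)) (N:ℤ) := by
    refine Finset.biUnion_subset.mpr fun m hm => ?_
    rw [Finset.mem_Icc] at hm
    exact shell_subset hm.1 (by exact_mod_cast hm.2)
  calc ((d:ℝ)+2) ^ (-((d:ℝ)+1)/2) * (∑ m ∈ Finset.Icc 1 N, 1/(m:ℝ))
      = ∑ m ∈ Finset.Icc 1 N, ((d:ℝ)+2) ^ (-((d:ℝ)+1)/2) * (1/(m:ℝ)) := by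
        rw [Finset.mul_sum]
    _ ≤ ∑ m ∈ Finset.Icc 1 N, ∑ k ∈ shell d m, jbZ k ^ (-(((d+1:ℕ)):ℝ)) :=
        Finset.sum_le_sum fun m hm => shell_sum_ge d (Finset.mem_Icc.mp hm).1
    _ = ∑ k ∈ (Finset.Icc 1 N).biUnion (shell d), jbZ k ^ (-(((d+1:ℕ)):ℝ)) :=
        (Finset.sum_biUnion hdisj).symm
    _ ≤ SS (d+1) (N:ℤ) :=
        Finset.sum_le_sum_of_subset_of_nonneg hsub fun k _ _ => jbZ_rpow_nonneg k _

lemma exists_SS_large (d : ℕ) (R : ℝ) : ∃ N : ℤ, 1 ≤ N ∧ R < SS (d+1) N := by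
  set c : ℝ := ((d:ℝ)+2) ^ (-((d:ℝ)+1)/2) with hc
  have hcpos : 0 < c := Real.rpow_pos_of_pos (by positivity) _
  have htend := Real.tendsto_sum_range_one_div_nat_succ_atTop
  have hev := (htend.eventually_gt_atTop (R/c)).and (Filter.eventually_ge_atTop 1)
  obtain ⟨M, hM1, hM2⟩ := hev.exists
  have hreindex : ∑ m ∈ Finset.Icc 1 M, (1:ℝ)/(m:ℝ)
      = ∑ i ∈ Finset.range M, 1/((i:ℝ)+1) := by
    rw [← Finset.Ico_add_one_right_eq_Icc, Finset.sum_Ico_eq_sum_range]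
    refine Finset.sum_congr (by norm_num) fun i _ => ?_
    push_cast
    rw [add_comm]
  refine ⟨(M:ℤ), by exact_mod_cast hM2, ?_⟩
  have h1 : R < c * (∑ m ∈ Finset.Icc 1 M, (1:ℝ)/(m:ℝ)) := by
    rw [hreindex]
    have := (div_lt_iff₀ hcpos).mp hM1
    calc R = (R/c) * c := by field_simp
      _ < (∑ i ∈ Finset.range M, 1/((i:ℝ)+1)) * c := by
          exact mul_lt_mul_of_pos_right hM1 hcpos
      _ = c * ∑ i ∈ Finset.range M, 1/((i:ℝ)+1) := mul_comm _ _
  exact lt_of_lt_of_le h1 (SS_ge_harmonic d M)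

end ConvAux

namespace ConvAux

lemma normA_eq {n : ℕ} (s : ℝ) {q : ℝ≥0∞} (h0 : q ≠ 0) (htop : q ≠ ∞) (N : ℤ) :
    lqsNormR q s (testA n (s + (n:ℝ)/q.toReal) N)
      = ENNReal.ofReal ((SS n N) ^ (1/q.toReal)) := by
  unfold lqsNormR
  rw [eLpNorm_count_eq _ (fun k => mul_nonneg (jbZ_rpow_nonneg k s) (abs_nonneg _))
      (cube n (-N) N) (fun k hk => by rw [testA, if_neg hk, abs_zero, mul_zero]) h0 htop]
  congr 2
  refine Finset.sum_congr rfl fun k hk => ?_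
  rw [testA, if_pos hk, abs_of_nonneg (jbZ_rpow_nonneg k _), ← Real.rpow_add (jbZ_pos k),
    show s + -(s + (n:ℝ)/q.toReal) = -((n:ℝ)/q.toReal) by ring,
    ← Real.rpow_mul (jbZ_pos k).le,
    show -((n:ℝ)/q.toReal) * q.toReal = -(n:ℝ) by
      rw [neg_mul, div_mul_cancel₀ _ (ENNReal.toReal_pos h0 htop).ne']]

lemma normB_le {n : ℕ} (s : ℝ) {q : ℝ≥0∞} (h0 : q ≠ 0) (htop : q ≠ ∞) (N : ℤ) (hN : 0 ≤ N) :
    lqsNormR q s (testB n N) ≤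
      ENNReal.ofReal ((((cube n N (5*N)).card : ℝ) * Whi n s N ^ q.toReal) ^ (1/q.toReal)) := by
  have hp := ENNReal.toReal_pos h0 htop
  unfold lqsNormR
  rw [eLpNorm_count_eq _ (fun k => mul_nonneg (jbZ_rpow_nonneg k s) (abs_nonneg _))
      (cube n N (5*N)) (fun k hk => by rw [testB, if_neg hk, abs_zero, mul_zero]) h0 htop]
  refine ENNReal.ofReal_le_ofReal (Real.rpow_le_rpow
    (Finset.sum_nonneg fun k _ => Real.rpow_nonneg
      (mul_nonneg (jbZ_rpow_nonneg k s) (abs_nonneg _)) _) ?_ (by positivity))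
  calc ∑ k ∈ cube n N (5*N), (jbZ k ^ s * |testB n N k|) ^ q.toReal
      ≤ ∑ _k ∈ cube n N (5*N), Whi n s N ^ q.toReal := by
        refine Finset.sum_le_sum fun k hk => ?_
        rw [testB, if_pos hk, abs_one, mul_one]
        exact Real.rpow_le_rpow (jbZ_rpow_nonneg k s) (weight_sandwich s hN hk).2 hp.le
    _ = ((cube n N (5*N)).card : ℝ) * Whi n s N ^ q.toReal := by
        rw [Finset.sum_const, nsmul_eq_mul]

lemma normConv_ge {n : ℕ} (s σ : ℝ) {q : ℝ≥0∞} (h0 : q ≠ 0) (htop : q ≠ ∞)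
    (N : ℤ) (hN : 0 ≤ N) :
    ENNReal.ofReal ((((cube n (2*N) (3*N)).card : ℝ)
        * (Wlo n s N * AA n σ N) ^ q.toReal) ^ (1/q.toReal))
      ≤ lqsNormR q s (fun k => ∑' ℓ, testA n σ N ℓ * testB n N (k - ℓ)) := by
  have hp := ENNReal.toReal_pos h0 htop
  have hWA : 0 ≤ Wlo n s N * AA n σ N := mul_nonneg (Wlo_pos s N).le (AA_nonneg σ N)
  refine le_trans (ENNReal.ofReal_le_ofReal ?_)
    (eLpNorm_count_ge _ (cube n (2*N) (3*N)) h0 htop)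
  refine Real.rpow_le_rpow
    (mul_nonneg (Nat.cast_nonneg _) (Real.rpow_nonneg hWA _)) ?_ (by positivity)
  have hconst : ((cube n (2*N) (3*N)).card : ℝ) * (Wlo n s N * AA n σ N) ^ q.toReal
      = ∑ _k ∈ cube n (2*N) (3*N), (Wlo n s N * AA n σ N) ^ q.toReal := by
    rw [Finset.sum_const, nsmul_eq_mul]
  rw [hconst]
  refine Finset.sum_le_sum fun k hk => ?_
  show (Wlo n s N * AA n σ N) ^ q.toReal
      ≤ abs (jbZ k ^ s * abs (∑' ℓ, testA n σ N ℓ * testB n N (k - ℓ))) ^ q.toReal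
  have hkQ : k ∈ cube n N (5*N) := by
    rw [mem_cube] at hk ⊢
    intro i
    have := hk i
    omega
  rw [conv_eq σ N hN hk, abs_of_nonneg (AA_nonneg σ N),
    abs_of_nonneg (mul_nonneg (jbZ_rpow_nonneg k s) (AA_nonneg σ N))]
  exact Real.rpow_le_rpow hWA
    (mul_le_mul_of_nonneg_right (weight_sandwich s hN hkQ).1 (AA_nonneg σ N)) hp.le

end ConvAux

open ConvAux

/-- Let `1 < q ≤ ∞`, `s ∈ ℝ`, `n ≥ 1`. If there is `C > 0` such that
`‖a∗b‖_{ℓ^q_s} ≤ C ‖a‖_{ℓ^q_s} ‖b‖_{ℓ^q_s}` for all finitely supported nonnegative sequences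
`a, b` on `ℤⁿ`, then necessarily `s > n/q′`. -/
theorem necessity_of_weight_for_convolution_algebra (n : ℕ) (hn : 0 < n)
    (q : ℝ≥0∞) (hq : 1 < q) (s : ℝ)
    (h : ∃ C : ℝ≥0, 0 < C ∧ ∀ a b : (Fin n → ℤ) → ℝ,
      (Function.support a).Finite → (Function.support b).Finite →
      (∀ k, 0 ≤ a k) → (∀ k, 0 ≤ b k) →
      lqsNormR q s (fun k => ∑' ℓ, a ℓ * b (k - ℓ)) ≤ C * lqsNormR q s a * lqsNormR q s b) :
    (n : ℝ) * (1 - 1 / q.toReal) < s := by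
  classical
  by_contra hs
  push_neg at hs
  obtain ⟨C, hC, hCineq⟩ := h
  obtain ⟨d, rfl⟩ : ∃ d, n = d + 1 := ⟨n - 1, (Nat.succ_pred_eq_of_pos hn).symm⟩
  rcases eq_or_ne q ∞ with rfl | hqtop
  · -- the case `q = ∞`
    have hsn : s ≤ ((d+1:ℕ):ℝ) := by simpa using hs
    obtain ⟨N, hN1, hNlarge⟩ := exists_SS_large d ((C:ℝ) * 25 ^ (|s|/2))
    have hN0 : (0:ℤ) ≤ N := by omega
    have key := hCineq (testA (d+1) s N) (testB (d+1) N)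
      (testA_support s N) (testB_support N) (testA_nonneg s N) (testB_nonneg N)
    have hWl0 := Wlo_pos (n := d+1) s N
    have hWh0 := Whi_pos (n := d+1) s N
    have ha : lqsNormR ⊤ s (testA (d+1) s N) ≤ ENNReal.ofReal 1 := by
      unfold lqsNormR
      refine eLpNorm_count_top_le _ 1 fun k => ?_
      by_cases hk : k ∈ cube (d+1) (-N) N
      · rw [testA, if_pos hk, abs_of_nonneg (jbZ_rpow_nonneg k _),
          ← Real.rpow_add (jbZ_pos k), add_neg_cancel, Real.rpow_zero, norm_one]
      · rw [testA, if_neg hk, abs_zero, mul_zero, norm_zero]; norm_num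
    have hb : lqsNormR ⊤ s (testB (d+1) N) ≤ ENNReal.ofReal (Whi (d+1) s N) := by
      unfold lqsNormR
      refine eLpNorm_count_top_le _ _ fun k => ?_
      by_cases hk : k ∈ cube (d+1) N (5*N)
      · rw [testB, if_pos hk, abs_one, mul_one,
          Real.norm_of_nonneg (jbZ_rpow_nonneg k _)]
        exact (weight_sandwich s hN0 hk).2
      · rw [testB, if_neg hk, abs_zero, mul_zero, norm_zero]; exact hWh0.le
    have hconv : ENNReal.ofReal (Wlo (d+1) s N * SS (d+1) N)
        ≤ lqsNormR ⊤ s (fun k => ∑' ℓ, testA (d+1) s N ℓ * testB (d+1) N (k - ℓ)) := by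
      set k₀ : Zn (d+1) := fun _ => 2*N with hk₀def
      have hk₀M : k₀ ∈ cube (d+1) (2*N) (3*N) := by
        rw [mem_cube]; intro i; constructor <;> simp [hk₀def] <;> omega
      have hk₀Q : k₀ ∈ cube (d+1) N (5*N) := by
        rw [mem_cube] at hk₀M ⊢
        intro i; have := hk₀M i; omega
      have hge := eLpNorm_count_top_ge
        (fun k => jbZ k ^ s * |∑' ℓ, testA (d+1) s N ℓ * testB (d+1) N (k - ℓ)|) k₀
      refine le_trans (ENNReal.ofReal_le_ofReal ?_) hge
      show Wlo (d+1) s N * SS (d+1) N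
          ≤ abs (jbZ k₀ ^ s * abs (∑' ℓ, testA (d+1) s N ℓ * testB (d+1) N (k₀ - ℓ)))
      rw [conv_eq s N hN0 hk₀M, abs_of_nonneg (AA_nonneg s N),
        abs_of_nonneg (mul_nonneg (jbZ_rpow_nonneg k₀ s) (AA_nonneg s N))]
      exact mul_le_mul (weight_sandwich s hN0 hk₀Q).1 (SS_le_AA hsn N)
        (by linarith [one_le_SS (n := d+1) N hN0]) (jbZ_rpow_nonneg k₀ s)
    have chain := le_trans hconv (le_trans key
      (mul_le_mul' (mul_le_mul' le_rfl ha) hb))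
    rw [← ENNReal.ofReal_coe_nnreal, ← ENNReal.ofReal_mul C.coe_nonneg,
      ← ENNReal.ofReal_mul (by positivity : (0:ℝ) ≤ (C:ℝ) * 1)] at chain
    have hreal := (ENNReal.ofReal_le_ofReal_iff
      (by positivity : (0:ℝ) ≤ (C:ℝ) * 1 * Whi (d+1) s N)).mp chain
    have h2 : (C:ℝ) * 1 * Whi (d+1) s N ≤ ((C:ℝ) * 25 ^ (|s|/2)) * Wlo (d+1) s N := by
      have := mul_le_mul_of_nonneg_left (Whi_le (n := d+1) s N) C.coe_nonneg
      calc (C:ℝ) * 1 * Whi (d+1) s N = (C:ℝ) * Whi (d+1) s N := by ring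
        _ ≤ (C:ℝ) * (25 ^ (|s|/2) * Wlo (d+1) s N) := this
        _ = ((C:ℝ) * 25 ^ (|s|/2)) * Wlo (d+1) s N := by ring
    have h3 : SS (d+1) N * Wlo (d+1) s N ≤ ((C:ℝ) * 25 ^ (|s|/2)) * Wlo (d+1) s N := by
      calc SS (d+1) N * Wlo (d+1) s N = Wlo (d+1) s N * SS (d+1) N := by ring
        _ ≤ _ := le_trans hreal h2
    have h4 : SS (d+1) N ≤ (C:ℝ) * 25 ^ (|s|/2) := le_of_mul_le_mul_right h3 hWl0
    linarith
  · -- the case `q < ∞`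
    have h0 : q ≠ 0 := (lt_trans zero_lt_one hq).ne'
    have hp1 : 1 < q.toReal := by
      have h1 : (1:ℝ≥0∞).toReal < q.toReal := ENNReal.toReal_strict_mono hqtop hq
      simpa using h1
    have hp0 : (0:ℝ) < q.toReal := lt_trans zero_lt_one hp1
    have hσ : s + ((d+1:ℕ):ℝ)/q.toReal ≤ ((d+1:ℕ):ℝ) := by
      have h2 : ((d+1:ℕ):ℝ) * (1 - 1/q.toReal) = ((d+1:ℕ):ℝ) - ((d+1:ℕ):ℝ)/q.toReal := by
        ring
      rw [h2] at hs
      linarith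
    obtain ⟨N, hN1, hNlarge⟩ := exists_SS_large d
      (((C:ℝ) * 5^(d+1) * 25 ^ (|s|/2)) ^ (q.toReal/(q.toReal-1)))
    have hN0 : (0:ℤ) ≤ N := by omega
    have key := hCineq (testA (d+1) (s + ((d+1:ℕ):ℝ)/q.toReal) N) (testB (d+1) N)
      (testA_support _ N) (testB_support N) (testA_nonneg _ N) (testB_nonneg N)
    have ha := normA_eq (n := d+1) s h0 hqtop N
    have hb := normB_le (n := d+1) s h0 hqtop N hN0
    have hc := normConv_ge (n := d+1) s (s + ((d+1:ℕ):ℝ)/q.toReal) h0 hqtop N hN0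
    set p := q.toReal with hpdef
    set S : ℝ := SS (d+1) N with hSdef
    set A : ℝ := AA (d+1) (s + ((d+1:ℕ):ℝ)/p) N with hAdef
    set Wl : ℝ := Wlo (d+1) s N with hWldef
    set Wh : ℝ := Whi (d+1) s N with hWhdef
    set cM : ℝ := ((cube (d+1) (2*N) (3*N)).card : ℝ) with hcMdef
    set cQ : ℝ := ((cube (d+1) N (5*N)).card : ℝ) with hcQdef
    have hS1 : 1 ≤ S := one_le_SS N hN0
    have hS0 : (0:ℝ) < S := lt_of_lt_of_le one_pos hS1
    have hA0 : 0 ≤ A := AA_nonneg _ N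
    have hWl0 : 0 < Wl := Wlo_pos s N
    have hWh0 : 0 < Wh := Whi_pos s N
    have hcM0 : (0:ℝ) < cM := by
      rw [hcMdef]; exact_mod_cast cardM_pos (n := d+1) N hN0
    have hcQ0 : (0:ℝ) ≤ cQ := by rw [hcQdef]; positivity
    have hWA0 : (0:ℝ) ≤ Wl * A := mul_nonneg hWl0.le hA0
    -- collapse the ENNReal inequality to a real one
    have chain : ENNReal.ofReal ((cM * (Wl * A) ^ p) ^ (1/p))
        ≤ ENNReal.ofReal ((C:ℝ) * (S ^ (1/p) * (cQ * Wh ^ p) ^ (1/p))) := by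
      refine le_trans hc (le_trans key ?_)
      rw [ha]
      calc (C:ℝ≥0∞) * ENNReal.ofReal (S ^ (1/p)) * lqsNormR q s (testB (d+1) N)
          ≤ (C:ℝ≥0∞) * ENNReal.ofReal (S ^ (1/p))
              * ENNReal.ofReal ((cQ * Wh ^ p) ^ (1/p)) := mul_le_mul' le_rfl hb
        _ = ENNReal.ofReal ((C:ℝ) * (S ^ (1/p) * (cQ * Wh ^ p) ^ (1/p))) := by
            rw [ENNReal.ofReal_mul C.coe_nonneg,
              ENNReal.ofReal_mul (Real.rpow_nonneg hS0.le _),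
              ENNReal.ofReal_coe_nnreal, mul_assoc]
    have hRHS0 : (0:ℝ) ≤ (C:ℝ) * (S ^ (1/p) * (cQ * Wh ^ p) ^ (1/p)) :=
      mul_nonneg C.coe_nonneg (mul_nonneg (Real.rpow_nonneg hS0.le _)
        (Real.rpow_nonneg (mul_nonneg hcQ0 (Real.rpow_nonneg hWh0.le _)) _))
    have hreal := (ENNReal.ofReal_le_ofReal_iff hRHS0).mp chain
    have eL : (cM * (Wl * A) ^ p) ^ (1/p) = cM ^ (1/p) * (Wl * A) := by
      rw [Real.mul_rpow hcM0.le (Real.rpow_nonneg hWA0 _), ← Real.rpow_mul hWA0,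
        mul_one_div_cancel hp0.ne', Real.rpow_one]
    have eQ : (cQ * Wh ^ p) ^ (1/p) = cQ ^ (1/p) * Wh := by
      rw [Real.mul_rpow hcQ0 (Real.rpow_nonneg hWh0.le _), ← Real.rpow_mul hWh0.le,
        mul_one_div_cancel hp0.ne', Real.rpow_one]
    rw [eL, eQ] at hreal
    -- compare cardinalities
    have hcQle : cQ ^ (1/p) ≤ 5^(d+1) * cM ^ (1/p) := by
      have h1 : cQ ≤ 5^(d+1) * cM := by
        rw [hcQdef, hcMdef]
        exact_mod_cast cardQ_le (n := d+1) N hN0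
      have h5 : (1:ℝ) ≤ (5:ℝ)^(d+1) := one_le_pow₀ (by norm_num)
      calc cQ ^ (1/p) ≤ ((5:ℝ)^(d+1) * cM) ^ (1/p) :=
            Real.rpow_le_rpow hcQ0 h1 (by positivity)
        _ = ((5:ℝ)^(d+1)) ^ (1/p) * cM ^ (1/p) := Real.mul_rpow (by positivity) hcM0.le
        _ ≤ 5^(d+1) * cM ^ (1/p) := by
            refine mul_le_mul_of_nonneg_right ?_ (Real.rpow_nonneg hcM0.le _)
            calc ((5:ℝ)^(d+1)) ^ (1/p) ≤ ((5:ℝ)^(d+1)) ^ (1:ℝ) :=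
                  Real.rpow_le_rpow_of_exponent_le h5
                    ((div_le_one hp0).mpr (by linarith))
              _ = (5:ℝ)^(d+1) := Real.rpow_one _
    have hWhle : Wh ≤ 25 ^ (|s|/2) * Wl := Whi_le s N
    have hSA : S ≤ A := SS_le_AA hσ N
    -- assemble
    have step1 : cM ^ (1/p) * (Wl * S) ≤ cM ^ (1/p) * (Wl * A) :=
      mul_le_mul_of_nonneg_left (mul_le_mul_of_nonneg_left hSA hWl0.le)
        (Real.rpow_nonneg hcM0.le _)
    have step3 : (C:ℝ) * (S ^ (1/p) * (cQ ^ (1/p) * Wh))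
        ≤ (C:ℝ) * (S ^ (1/p) * ((5^(d+1) * cM ^ (1/p)) * (25 ^ (|s|/2) * Wl))) := by
      refine mul_le_mul_of_nonneg_left (mul_le_mul_of_nonneg_left ?_
        (Real.rpow_nonneg hS0.le _)) C.coe_nonneg
      exact mul_le_mul hcQle hWhle hWh0.le (by positivity)
    have hbig : S * (cM ^ (1/p) * Wl)
        ≤ (((C:ℝ) * 5^(d+1) * 25 ^ (|s|/2)) * S ^ (1/p)) * (cM ^ (1/p) * Wl) := by
      calc S * (cM ^ (1/p) * Wl) = cM ^ (1/p) * (Wl * S) := by ring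
        _ ≤ cM ^ (1/p) * (Wl * A) := step1
        _ ≤ (C:ℝ) * (S ^ (1/p) * (cQ ^ (1/p) * Wh)) := hreal
        _ ≤ (C:ℝ) * (S ^ (1/p) * ((5^(d+1) * cM ^ (1/p)) * (25 ^ (|s|/2) * Wl))) := step3
        _ = (((C:ℝ) * 5^(d+1) * 25 ^ (|s|/2)) * S ^ (1/p)) * (cM ^ (1/p) * Wl) := by ring
    have hSK : S ≤ ((C:ℝ) * 5^(d+1) * 25 ^ (|s|/2)) * S ^ (1/p) :=
      le_of_mul_le_mul_right hbig (mul_pos (Real.rpow_pos_of_pos hcM0 _) hWl0)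
    have hfac : S ^ (1 - 1/p) * S ^ (1/p) = S := by
      rw [← Real.rpow_add hS0, sub_add_cancel, Real.rpow_one]
    have hstep : S ^ (1 - 1/p) ≤ (C:ℝ) * 5^(d+1) * 25 ^ (|s|/2) := by
      refine le_of_mul_le_mul_right ?_ (Real.rpow_pos_of_pos hS0 (1/p))
      rw [hfac]
      exact hSK
    have hpm1 : q.toReal - 1 ≠ 0 := by
      rw [← hpdef]; intro hcon; rw [sub_eq_zero] at hcon; exact (ne_of_gt hp1) hcon
    have hexp : (1 - 1/p) * (p/(p-1)) = 1 := by
      field_simp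
      exact div_self hpm1
    have hSfin : S ≤ ((C:ℝ) * 5^(d+1) * 25 ^ (|s|/2)) ^ (p/(p-1)) := by
      have hS' : S = (S ^ (1 - 1/p)) ^ (p/(p-1)) := by
        rw [← Real.rpow_mul hS0.le, hexp, Real.rpow_one]
      rw [hS']
      exact Real.rpow_le_rpow (Real.rpow_nonneg hS0.le _) hstep
        (div_nonneg (by linarith) (by linarith))
    linarith
end
end
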